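/- Let (Ω, μ) be a σ-finite measure space and let T be a bounded linear operator on L²(Ω). If for every measurable set E ⊆ Ω of finite measure one has T(χ_E) = χ_E · T(χ_E) (pointwise almost everywhere), then there exists θ ∈ L^∞(Ω) such that T(h) = θ · h for all h ∈ L²(Ω). -/

import Mathlib

open MeasureTheory
open scoped ENNReal symmDiff

open Filter Topology in
/-- Let `(Ω, μ)` be a σ-finite measure space and `T` a bounded linear
operator on `L²(Ω)`. If for every measurable set `E ⊆ Ω` of finite measure one has
`T(χ_E) = χ_E · T(χ_E)` a.e., then there exists `θ ∈ L^∞(Ω)` such that `T h = θ · h`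
for all `h ∈ L²(Ω)`. -/
theorem stmt0 {Ω : Type*} [MeasurableSpace Ω] (μ : Measure Ω) [SigmaFinite μ]
    (T : Lp ℂ 2 μ →L[ℂ] Lp ℂ 2 μ)
    (h : ∀ (E : Set Ω) (hE : MeasurableSet E) (hμE : μ E ≠ ∞),
      (T (indicatorConstLp 2 hE hμE (1 : ℂ)) : Ω → ℂ) =ᵐ[μ]
        fun x => E.indicator (fun _ => (1 : ℂ)) x
          * (T (indicatorConstLp 2 hE hμE (1 : ℂ)) : Ω → ℂ) x) :
    ∃ θ : Ω → ℂ, MemLp θ ∞ μ ∧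
      ∀ f : Lp ℂ 2 μ, (T f : Ω → ℂ) =ᵐ[μ] fun x => θ x * (f : Ω → ℂ) x := by
  classical
  set S : ℕ → Set Ω := spanningSets μ with hSdef
  have hSm : ∀ n, MeasurableSet (S n) := measurableSet_spanningSets μ
  have hSf : ∀ n, μ (S n) ≠ ∞ := fun n => (measure_spanningSets_lt_top μ n).ne
  -- `T χ_E` vanishes a.e. outside `E`.
  have hvanish : ∀ (E : Set Ω) (hE : MeasurableSet E) (hμE : μ E ≠ ∞),
      ∀ᵐ x ∂μ, x ∉ E → (T (indicatorConstLp 2 hE hμE (1 : ℂ)) : Ω → ℂ) x = 0 := by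
    intro E hE hμE
    filter_upwards [h E hE hμE] with x hx hxE
    rw [hx, Set.indicator_of_notMem hxE, zero_mul]
  -- For `A ⊆ B`, `T χ_B = T χ_A` a.e. on `A`.
  have hsplit : ∀ (A B : Set Ω) (hA : MeasurableSet A) (hB : MeasurableSet B)
      (hμA : μ A ≠ ∞) (hμB : μ B ≠ ∞), A ⊆ B →
      ∀ᵐ x ∂μ, x ∈ A → (T (indicatorConstLp 2 hB hμB (1 : ℂ)) : Ω → ℂ) x
        = (T (indicatorConstLp 2 hA hμA (1 : ℂ)) : Ω → ℂ) x := by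
    intro A B hA hB hμA hμB hAB
    have hd : MeasurableSet (B \ A) := hB.diff hA
    have hμd : μ (B \ A) ≠ ∞ := ((measure_mono Set.diff_subset).trans_lt hμB.lt_top).ne
    have hunion : indicatorConstLp 2 hB hμB (1 : ℂ)
        = indicatorConstLp 2 hA hμA 1 + indicatorConstLp 2 hd hμd 1 := by
      ext1
      filter_upwards [Lp.coeFn_add (indicatorConstLp 2 hA hμA (1 : ℂ))
        (indicatorConstLp 2 hd hμd 1),
        indicatorConstLp_coeFn (μ := μ) (p := 2) (hs := hB) (hμs := hμB) (c := (1 : ℂ)),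
        indicatorConstLp_coeFn (μ := μ) (p := 2) (hs := hA) (hμs := hμA) (c := (1 : ℂ)),
        indicatorConstLp_coeFn (μ := μ) (p := 2) (hs := hd) (hμs := hμd) (c := (1 : ℂ))]
        with x h1 h2 h3 h4
      rw [h2, h1, Pi.add_apply, h3, h4]
      by_cases hxA : x ∈ A
      · rw [Set.indicator_of_mem (hAB hxA), Set.indicator_of_mem hxA,
          Set.indicator_of_notMem (fun hc : x ∈ B \ A => hc.2 hxA), add_zero]
      · by_cases hxB : x ∈ B
        · have hmem : x ∈ B \ A := ⟨hxB, hxA⟩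
          rw [Set.indicator_of_mem hxB, Set.indicator_of_notMem hxA,
            Set.indicator_of_mem hmem, zero_add]
        · rw [Set.indicator_of_notMem hxB, Set.indicator_of_notMem hxA,
            Set.indicator_of_notMem (fun hc : x ∈ B \ A => hxB hc.1), add_zero]
    have hTadd : T (indicatorConstLp 2 hB hμB (1 : ℂ))
        = T (indicatorConstLp 2 hA hμA 1) + T (indicatorConstLp 2 hd hμd 1) := by
      rw [hunion, map_add]
    filter_upwards [hvanish (B \ A) hd hμd,
      Lp.coeFn_add (T (indicatorConstLp 2 hA hμA 1)) (T (indicatorConstLp 2 hd hμd 1))]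
      with x hx1 hx2 hxA
    rw [hTadd, hx2, Pi.add_apply, hx1 (fun hc => hc.2 hxA), add_zero]
  -- measurable representatives of `T χ_{S n}`
  obtain ⟨g', hg'meas, hg'⟩ : ∃ g' : ℕ → Ω → ℂ, (∀ n, Measurable (g' n)) ∧
      ∀ n, (T (indicatorConstLp 2 (hSm n) (hSf n) (1 : ℂ)) : Ω → ℂ) =ᵐ[μ] g' n :=
    ⟨fun n => (Lp.aestronglyMeasurable
        (T (indicatorConstLp 2 (hSm n) (hSf n) (1 : ℂ)))).mk _,
      fun n => (Lp.aestronglyMeasurable _).stronglyMeasurable_mk.measurable,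
      fun n => (Lp.aestronglyMeasurable _).ae_eq_mk⟩
  -- the multiplier
  set θ : Ω → ℂ := fun x => g' (spanningSetsIndex μ x) x with hθdef
  have hθmeas : Measurable θ := by
    have h1 : Measurable fun q : Ω × ℕ => g' q.2 q.1 :=
      measurable_from_prod_countable_left fun n => hg'meas n
    exact h1.comp (measurable_id.prodMk (measurableSet_spanningSetsIndex μ))
  -- a.e. on `S n`, `θ = T χ_{S n}`.
  have hθg : ∀ n, ∀ᵐ x ∂μ, x ∈ S n →
      θ x = (T (indicatorConstLp 2 (hSm n) (hSf n) (1 : ℂ)) : Ω → ℂ) x := by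
    intro n
    have h1 : ∀ᵐ x ∂μ, ∀ k,
        (T (indicatorConstLp 2 (hSm k) (hSf k) (1 : ℂ)) : Ω → ℂ) x = g' k x :=
      ae_all_iff.2 hg'
    have h2 : ∀ᵐ x ∂μ, ∀ k, k ≤ n → x ∈ S k →
        (T (indicatorConstLp 2 (hSm n) (hSf n) (1 : ℂ)) : Ω → ℂ) x
          = (T (indicatorConstLp 2 (hSm k) (hSf k) (1 : ℂ)) : Ω → ℂ) x := by
      refine ae_all_iff.2 fun k => ?_
      by_cases hk : k ≤ n
      · filter_upwards [hsplit (S k) (S n) (hSm k) (hSm n) (hSf k) (hSf n)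
          (monotone_spanningSets μ hk)] with x hx _ hxk using hx hxk
      · filter_upwards with x hx using absurd hx hk
    filter_upwards [h1, h2] with x h1x h2x hxn
    have hN : spanningSetsIndex μ x ≤ n := by
      rw [spanningSetsIndex]
      exact Nat.find_le hxn
    have hmem : x ∈ S (spanningSetsIndex μ x) := mem_spanningSetsIndex μ x
    calc θ x = g' (spanningSetsIndex μ x) x := rfl
      _ = (T (indicatorConstLp 2 (hSm (spanningSetsIndex μ x))
            (hSf (spanningSetsIndex μ x)) (1 : ℂ)) : Ω → ℂ) x := (h1x _).symm
      _ = _ := (h2x _ hN hmem).symm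
  -- the key multiplicativity property for indicators
  have hkey : ∀ (E : Set Ω) (hE : MeasurableSet E) (hμE : μ E ≠ ∞),
      (T (indicatorConstLp 2 hE hμE (1 : ℂ)) : Ω → ℂ) =ᵐ[μ]
        fun x => θ x * E.indicator (fun _ => (1 : ℂ)) x := by
    intro E hE hμE
    have hEn : ∀ n, MeasurableSet (E ∩ S n) := fun n => hE.inter (hSm n)
    have hEnf : ∀ n, μ (E ∩ S n) ≠ ∞ :=
      fun n => ((measure_mono Set.inter_subset_left).trans_lt hμE.lt_top).ne
    have step1 : ∀ n, (T (indicatorConstLp 2 (hEn n) (hEnf n) (1 : ℂ)) : Ω → ℂ) =ᵐ[μ]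
        fun x => θ x * (E ∩ S n).indicator (fun _ => (1 : ℂ)) x := by
      intro n
      filter_upwards [hsplit (E ∩ S n) (S n) (hEn n) (hSm n) (hEnf n) (hSf n)
        Set.inter_subset_right, hθg n, hvanish (E ∩ S n) (hEn n) (hEnf n)]
        with x hx1 hx2 hx3
      by_cases hxE : x ∈ E ∩ S n
      · rw [Set.indicator_of_mem hxE, mul_one, hx2 hxE.2, hx1 hxE]
      · rw [Set.indicator_of_notMem hxE, mul_zero]
        exact hx3 hxE
    -- convergence of `χ_{E ∩ S n}` to `χ_E` in `L²`
    have hconv : Tendsto (fun n => indicatorConstLp 2 (hEn n) (hEnf n) (1 : ℂ)) atTop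
        (𝓝 (indicatorConstLp 2 hE hμE (1 : ℂ))) := by
      refine tendsto_indicatorConstLp_set (by norm_num) ?_
      have hsymm : ∀ n, (E ∩ S n) ∆ E = E \ S n := by
        intro n
        rw [Set.symmDiff_def]
        have h1 : (E ∩ S n) \ E = ∅ := by
          rw [Set.diff_eq_empty]; exact Set.inter_subset_left
        rw [h1, Set.empty_union, Set.diff_inter, Set.diff_self, Set.empty_union]
      simp only [hsymm]
      have hInter : (⋂ n, E \ S n) = ∅ := by
        rw [← Set.diff_iUnion, iUnion_spanningSets, Set.diff_univ]
      have := tendsto_measure_iInter_atTop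
        (s := fun n => E \ S n)
        (fun n => (hE.diff (hSm n)).nullMeasurableSet)
        (fun i j hij => Set.diff_subset_diff_right (monotone_spanningSets μ hij))
        ⟨0, ((measure_mono Set.diff_subset).trans_lt hμE.lt_top).ne⟩
      rw [hInter, measure_empty] at this
      exact this
    have hT : Tendsto (fun n => T (indicatorConstLp 2 (hEn n) (hEnf n) (1 : ℂ))) atTop
        (𝓝 (T (indicatorConstLp 2 hE hμE (1 : ℂ)))) :=
      (T.continuous.tendsto _).comp hconv
    obtain ⟨ns, hns_mono, hns⟩ := (tendstoInMeasure_of_tendsto_Lp hT).exists_seq_tendsto_ae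
    filter_upwards [hns, ae_all_iff.2 fun i : ℕ => step1 (ns i)] with x hx1 hx2
    have h3 : Tendsto (fun i => θ x * (E ∩ S (ns i)).indicator (fun _ => (1 : ℂ)) x) atTop
        (𝓝 (θ x * E.indicator (fun _ => (1 : ℂ)) x)) := by
      by_cases hxE : x ∈ E
      · have hev : (fun i => θ x * (E ∩ S (ns i)).indicator (fun _ => (1 : ℂ)) x)
            =ᶠ[atTop] fun _ => θ x * E.indicator (fun _ => (1 : ℂ)) x := by
          filter_upwards [eventually_ge_atTop (spanningSetsIndex μ x)] with i hi
          have hxi : x ∈ S (ns i) :=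
            mem_spanningSets_of_index_le μ x (hi.trans (hns_mono.le_apply))
          have hmem : x ∈ E ∩ S (ns i) := ⟨hxE, hxi⟩
          rw [Set.indicator_of_mem hmem, Set.indicator_of_mem hxE]
        exact Tendsto.congr' hev.symm tendsto_const_nhds
      · have hev : ∀ i, θ x * (E ∩ S (ns i)).indicator (fun _ => (1 : ℂ)) x
            = θ x * E.indicator (fun _ => (1 : ℂ)) x := by
          intro i
          rw [Set.indicator_of_notMem hxE, Set.indicator_of_notMem
            (fun hc : x ∈ E ∩ S (ns i) => hxE hc.1)]
        exact Tendsto.congr (fun i => (hev i).symm) tendsto_const_nhds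
    exact tendsto_nhds_unique (hx1.congr fun i => hx2 i) h3
  -- θ is essentially bounded by ‖T‖
  have hbound : ∀ᵐ x ∂μ, ‖θ x‖ ≤ ‖T‖ := by
    -- it suffices to show that each exceedance set is null
    have hnull : ∀ (n k : ℕ),
        μ (S k ∩ {x | ‖T‖ + 1 / (n + 1 : ℝ) ≤ ‖θ x‖}) = 0 := by
      intro n k
      set ε : ℝ := 1 / (n + 1 : ℝ) with hεdef
      have hε : 0 < ε := by positivity
      set A : Set Ω := S k ∩ {x | ‖T‖ + ε ≤ ‖θ x‖} with hAdef
      have hAmeas : MeasurableSet A :=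
        (hSm k).inter (measurableSet_le measurable_const hθmeas.norm)
      have hAfin : μ A ≠ ∞ := ((measure_mono Set.inter_subset_left).trans_lt
        (hSf k).lt_top).ne
      by_contra hA0
      -- the norm of `T χ_A` is at least `(‖T‖ + ε) √(μ A)` and at most `‖T‖ √(μ A)`
      have hμA_pos : (0 : ℝ) < (μ A).toReal := ENNReal.toReal_pos hA0 hAfin
      set m : ℝ := (μ A).toReal ^ (1 / (2 : ℝ)) with hmdef
      have hm_pos : 0 < m := Real.rpow_pos_of_pos hμA_pos _
      have hupper : ‖T (indicatorConstLp 2 hAmeas hAfin (1 : ℂ))‖ ≤ ‖T‖ * m := by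
        calc ‖T (indicatorConstLp 2 hAmeas hAfin (1 : ℂ))‖
            ≤ ‖T‖ * ‖indicatorConstLp 2 hAmeas hAfin (1 : ℂ)‖ := T.le_opNorm _
          _ = ‖T‖ * m := by
              rw [norm_indicatorConstLp (by norm_num) (by norm_num)]
              congr 1
              rw [norm_one, one_mul, hmdef]
              norm_num
              rfl
      have hlower : (‖T‖ + ε) * m ≤ ‖T (indicatorConstLp 2 hAmeas hAfin (1 : ℂ))‖ := by
        have hle : eLpNorm (A.indicator fun _ => ((‖T‖ + ε : ℝ) : ℂ)) 2 μ
            ≤ eLpNorm ((T (indicatorConstLp 2 hAmeas hAfin (1 : ℂ))) : Ω → ℂ) 2 μ := by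
          rw [eLpNorm_congr_ae (hkey A hAmeas hAfin)]
          refine eLpNorm_mono_ae ?_
          filter_upwards with x
          by_cases hxA : x ∈ A
          · rw [Set.indicator_of_mem hxA, Set.indicator_of_mem hxA, mul_one]
            rw [Complex.norm_real, Real.norm_of_nonneg
              (add_nonneg (norm_nonneg T) hε.le)]
            exact hxA.2
          · rw [Set.indicator_of_notMem hxA, Set.indicator_of_notMem hxA, mul_zero,
              norm_zero]
        have hconst : eLpNorm (A.indicator fun _ => ((‖T‖ + ε : ℝ) : ℂ)) 2 μ
            = ‖((‖T‖ + ε : ℝ) : ℂ)‖₊ * μ A ^ (1 / (2 : ℝ)) := by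
          rw [eLpNorm_indicator_const hAmeas (by norm_num) (by norm_num)]
          rw [ENNReal.toReal_ofNat]
          rfl
        have hfin2 : eLpNorm ((T (indicatorConstLp 2 hAmeas hAfin (1 : ℂ))) : Ω → ℂ) 2 μ ≠ ∞ :=
          (Lp.eLpNorm_lt_top _).ne
        have := ENNReal.toReal_mono hfin2 (hconst ▸ hle)
        rw [Lp.norm_def]
        refine le_trans (le_of_eq ?_) this
        rw [ENNReal.toReal_mul, ← ENNReal.toReal_rpow]
        congr 1
        · rw [ENNReal.coe_toReal, coe_nnnorm, Complex.norm_real,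
            Real.norm_of_nonneg (add_nonneg (norm_nonneg T) hε.le)]
      have : (‖T‖ + ε) * m ≤ ‖T‖ * m := hlower.trans hupper
      have h2 : ‖T‖ + ε ≤ ‖T‖ := le_of_mul_le_mul_right this hm_pos
      linarith
    -- conclude the a.e. bound
    have hsub : {x | ¬ ‖θ x‖ ≤ ‖T‖} ⊆
        ⋃ n : ℕ, ⋃ k : ℕ, S k ∩ {x | ‖T‖ + 1 / ((n : ℝ) + 1) ≤ ‖θ x‖} := by
      intro x hx
      simp only [Set.mem_setOf_eq, not_le] at hx
      obtain ⟨n, hn⟩ := exists_nat_one_div_lt (by linarith : (0 : ℝ) < ‖θ x‖ - ‖T‖)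
      refine Set.mem_iUnion.2 ⟨n, Set.mem_iUnion.2 ⟨spanningSetsIndex μ x,
        mem_spanningSetsIndex μ x, ?_⟩⟩
      simp only [Set.mem_setOf_eq]
      linarith
    have : μ {x | ¬ ‖θ x‖ ≤ ‖T‖} = 0 := by
      refine measure_mono_null hsub ?_
      exact measure_iUnion_null fun n => measure_iUnion_null fun k => hnull n k
    exact this
  have hmemθ : MemLp θ ∞ μ := memLp_top_of_bound hθmeas.aestronglyMeasurable ‖T‖ hbound
  refine ⟨θ, hmemθ, ?_⟩
  -- conclude by density of simple functions
  refine Lp.induction (E := ℂ) (μ := μ) (p := 2) (by norm_num)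
    (fun f : Lp ℂ 2 μ => (T f : Ω → ℂ) =ᵐ[μ] fun x => θ x * (f : Ω → ℂ) x) ?_ ?_ ?_
  · -- indicators
    intro c s hs hμs
    rw [Lp.simpleFunc.coe_indicatorConst]
    have hsm : indicatorConstLp 2 hs hμs.ne c
        = c • indicatorConstLp 2 hs hμs.ne (1 : ℂ) := by
      ext1
      filter_upwards [indicatorConstLp_coeFn (μ := μ) (p := 2) (hs := hs)
        (hμs := hμs.ne) (c := c),
        Lp.coeFn_smul c (indicatorConstLp 2 hs hμs.ne (1 : ℂ)),
        indicatorConstLp_coeFn (μ := μ) (p := 2) (hs := hs)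
        (hμs := hμs.ne) (c := (1 : ℂ))] with x h1 h2 h3
      rw [h1, h2, Pi.smul_apply, h3, smul_eq_mul]
      by_cases hxs : x ∈ s
      · rw [Set.indicator_of_mem hxs, Set.indicator_of_mem hxs, mul_one]
      · rw [Set.indicator_of_notMem hxs, Set.indicator_of_notMem hxs, mul_zero]
    rw [hsm, T.map_smul]
    filter_upwards [hkey s hs hμs.ne, Lp.coeFn_smul c (T (indicatorConstLp 2 hs hμs.ne 1)),
      indicatorConstLp_coeFn (μ := μ) (p := 2) (hs := hs) (hμs := hμs.ne) (c := (1 : ℂ)),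
      Lp.coeFn_smul c (indicatorConstLp 2 hs hμs.ne (1 : ℂ))]
      with x hx1 hx2 hx3 hx4
    rw [hx2, Pi.smul_apply, hx1, smul_eq_mul, hx4, Pi.smul_apply, hx3, smul_eq_mul]
    ring
  · -- additivity
    intro f g hf hg hdisj hPf hPg
    filter_upwards [hPf, hPg, Lp.coeFn_add (T (hf.toLp f)) (T (hg.toLp g)),
      Lp.coeFn_add (hf.toLp f) (hg.toLp g)] with x h1 h2 h3 h4
    rw [map_add, h3, Pi.add_apply, h1, h2, h4, Pi.add_apply, mul_add]
  · -- closedness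
    refine IsSeqClosed.isClosed ?_
    intro f F hf hF
    obtain ⟨ns, hns1, hns2⟩ := (tendstoInMeasure_of_tendsto_Lp hF).exists_seq_tendsto_ae
    have hTconv : Tendsto (fun n => T (f (ns n))) atTop (𝓝 (T F)) :=
      (T.continuous.tendsto F).comp (hF.comp hns1.tendsto_atTop)
    obtain ⟨ms, hms1, hms2⟩ := (tendstoInMeasure_of_tendsto_Lp hTconv).exists_seq_tendsto_ae
    filter_upwards [hns2, hms2, ae_all_iff.2 fun n : ℕ => hf n] with x hx1 hx2 hx3
    have e1 : Tendsto (fun k => ((f (ns (ms k)) : Ω → ℂ)) x) atTop (𝓝 ((F : Ω → ℂ) x)) :=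
      hx1.comp hms1.tendsto_atTop
    have e2 : Tendsto (fun k => θ x * ((f (ns (ms k)) : Ω → ℂ)) x) atTop
        (𝓝 (θ x * (F : Ω → ℂ) x)) := e1.const_mul _
    exact tendsto_nhds_unique (hx2.congr fun k => hx3 (ns (ms k))) e2
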